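/- Let A ∈ ℝ^{n×n} and let u, v ∈ ℝ^n be nonzero with ⟨u,v⟩ = ⟨Au,v⟩ = ⟨u,Av⟩ = ⟨Au,Av⟩ = 0 and ⟨Au,u⟩/⟨u,u⟩ = ⟨Av,v⟩/⟨v,v⟩. Then for all α₁, α₂ ∈ ℝ with w = α₁u + α₂v ≠ 0, one has ⟨Aw,w⟩/⟨w,w⟩ = ⟨Au,u⟩/⟨u,u⟩, and ‖Aw‖²/‖w‖² lies between ‖Au‖²/‖u‖² and ‖Av‖²/‖v‖². -/

import Mathlib

open Matrix
open scoped RealInnerProductSpace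

noncomputable def mulVecE {ι : Type*} [Fintype ι] (A : Matrix ι ι ℝ)
    (x : EuclideanSpace ℝ ι) : EuclideanSpace ℝ ι := WithLp.toLp 2 (A.mulVec x)

open Classical in
noncomputable def ang {ι : Type*} [Fintype ι] (a b : EuclideanSpace ℝ ι) : ℝ :=
  if a = 0 ∨ b = 0 then 0 else Real.arccos (⟪a, b⟫ / (‖a‖ * ‖b‖))

noncomputable def zA {ι : Type*} [Fintype ι] (A : Matrix ι ι ℝ)
    (x : EuclideanSpace ℝ ι) : ℂ :=
  ((‖mulVecE A x‖ / ‖x‖ : ℝ) : ℂ) * Complex.exp (Complex.I * (ang (mulVecE A x) x : ℝ))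

noncomputable def SRG {ι : Type*} [Fintype ι] (A : Matrix ι ι ℝ) : Set ℂ :=
  {z | ∃ x : EuclideanSpace ℝ ι, x ≠ 0 ∧ (z = zA A x ∨ z = (starRingEnd ℂ) (zA A x))}

theorem stmt8 {n : ℕ} (A : Matrix (Fin n) (Fin n) ℝ) (u v : EuclideanSpace ℝ (Fin n))
    (hu : u ≠ 0) (hv : v ≠ 0) (h1 : ⟪u, v⟫ = 0) (h2 : ⟪mulVecE A u, v⟫ = 0)
    (h3 : ⟪u, mulVecE A v⟫ = 0) (h4 : ⟪mulVecE A u, mulVecE A v⟫ = 0)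
    (heq : ⟪mulVecE A u, u⟫ / ⟪u, u⟫ = ⟪mulVecE A v, v⟫ / ⟪v, v⟫)
    (α₁ α₂ : ℝ) (hw : α₁ • u + α₂ • v ≠ 0) :
    ⟪mulVecE A (α₁ • u + α₂ • v), α₁ • u + α₂ • v⟫ / ⟪α₁ • u + α₂ • v, α₁ • u + α₂ • v⟫
      = ⟪mulVecE A u, u⟫ / ⟪u, u⟫ ∧
    ‖mulVecE A (α₁ • u + α₂ • v)‖ ^ 2 / ‖α₁ • u + α₂ • v‖ ^ 2 ∈
      Set.uIcc (‖mulVecE A u‖ ^ 2 / ‖u‖ ^ 2) (‖mulVecE A v‖ ^ 2 / ‖v‖ ^ 2) := by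
  set w := α₁ • u + α₂ • v with hwdef
  have hlin : mulVecE A w = α₁ • mulVecE A u + α₂ • mulVecE A v := by
    unfold mulVecE
    ext i
    simp [hwdef, Matrix.mulVec, dotProduct, Finset.sum_add_distrib, Finset.mul_sum,
      mul_add, mul_left_comm]
  have hvu : ⟪v, u⟫ = (0:ℝ) := by rw [real_inner_comm]; exact h1
  have h2' : ⟪v, mulVecE A u⟫ = (0:ℝ) := by rw [real_inner_comm]; exact h2
  have h3' : ⟪mulVecE A v, u⟫ = (0:ℝ) := by rw [real_inner_comm]; exact h3
  have h4' : ⟪mulVecE A v, mulVecE A u⟫ = (0:ℝ) := by rw [real_inner_comm]; exact h4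
  have ha : (0:ℝ) < ⟪u, u⟫ := by rw [real_inner_self_eq_norm_sq]; exact pow_pos (norm_pos_iff.2 hu) 2
  have hb : (0:ℝ) < ⟪v, v⟫ := by rw [real_inner_self_eq_norm_sq]; exact pow_pos (norm_pos_iff.2 hv) 2
  have hww : ⟪w, w⟫ = α₁^2 * ⟪u, u⟫ + α₂^2 * ⟪v, v⟫ := by
    simp only [hwdef, inner_add_left, inner_add_right, real_inner_smul_left,
      real_inner_smul_right, h1, hvu, mul_zero, add_zero, zero_add]
    ring
  have hden : (0:ℝ) < α₁^2 * ⟪u, u⟫ + α₂^2 * ⟪v, v⟫ := by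
    rw [← hww]; exact by rw [real_inner_self_eq_norm_sq]; exact pow_pos (norm_pos_iff.2 hw) 2
  have hAww : ⟪mulVecE A w, w⟫ = α₁^2 * ⟪mulVecE A u, u⟫ + α₂^2 * ⟪mulVecE A v, v⟫ := by
    rw [hlin]
    simp only [hwdef, inner_add_left, inner_add_right, real_inner_smul_left,
      real_inner_smul_right, h2, h3', h2', h3, mul_zero, add_zero, zero_add]
    ring
  have hnw : ‖mulVecE A w‖^2 = α₁^2 * ‖mulVecE A u‖^2 + α₂^2 * ‖mulVecE A v‖^2 := by
    rw [hlin]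
    rw [← real_inner_self_eq_norm_sq, ← real_inner_self_eq_norm_sq,
      ← real_inner_self_eq_norm_sq]
    simp only [inner_add_left, inner_add_right, real_inner_smul_left,
      real_inner_smul_right, h4, h4', mul_zero, add_zero, zero_add]
    ring
  have hnu : ‖u‖^2 = ⟪u, u⟫ := (real_inner_self_eq_norm_sq u).symm
  have hnv : ‖v‖^2 = ⟪v, v⟫ := (real_inner_self_eq_norm_sq v).symm
  have hnww : ‖w‖^2 = ⟪w, w⟫ := (real_inner_self_eq_norm_sq w).symm
  set a := ⟪u, u⟫ with hadef
  set b := ⟪v, v⟫ with hbdef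
  set p := ⟪mulVecE A u, u⟫ with hpdef
  set q := ⟪mulVecE A v, v⟫ with hqdef
  set r := p / a with hrdef
  have hp : p = r * a := by rw [hrdef, div_mul_cancel₀ _ ha.ne']
  have hq : q = r * b := by
    rw [heq, div_mul_cancel₀ _ hb.ne']
  constructor
  · rw [hAww, hww, hp, hq, div_eq_iff hden.ne']
    ring
  · rw [hnw, hnww, hww, hnu, hnv]
    set NAu := ‖mulVecE A u‖^2 with hNAu
    set NAv := ‖mulVecE A v‖^2 with hNAv
    clear_value a b NAu NAv
    clear hadef hbdef hpdef hqdef hrdef hp hq heq hAww hnw hnww hww hnu hnv hlin hwdef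
    rcases le_total (NAu / a) (NAv / b) with h | h
    · rw [Set.uIcc_of_le h]
      have hkey : NAu * b ≤ NAv * a := by
        rw [div_le_div_iff₀ ha hb] at h; linarith
      constructor
      · rw [div_le_div_iff₀ ha hden]; nlinarith [sq_nonneg α₁, sq_nonneg α₂]
      · rw [div_le_div_iff₀ hden hb]; nlinarith [sq_nonneg α₁, sq_nonneg α₂]
    · rw [Set.uIcc_of_ge h]
      have hkey : NAv * a ≤ NAu * b := by
        rw [div_le_div_iff₀ hb ha] at h; linarith
      constructor
      · rw [div_le_div_iff₀ hb hden]; nlinarith [sq_nonneg α₁, sq_nonneg α₂]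
      · rw [div_le_div_iff₀ hden ha]; nlinarith [sq_nonneg α₁, sq_nonneg α₂]
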